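/- There is no SL₃(ℂ)-equivariant polynomial (regular) automorphism Φ of sl₃(ℂ) whose restriction to the regular nilpotent orbit sends g · e to g · e', where e = E₁₂ + E₂₃ and e' = E₁₂ − i·E₁₃ + E₂₃. More precisely, there is no G-equivariant morphism Φ : sl₃(ℂ) → sl₃(ℂ) (G = SL₃(ℂ) acting by conjugation) that is an automorphism of varieties and satisfies Φ(e) = e'. -/

import Mathlib

open Matrix Polynomial

/-- A map on `3×3` complex matrices is a polynomial (regular) map if each entry
of the output is given by a polynomial in the entries of the input. -/
def IsPolynomialMatrixMap
    (Φ : Matrix (Fin 3) (Fin 3) ℂ → Matrix (Fin 3) (Fin 3) ℂ) : Prop :=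
  ∃ P : Fin 3 → Fin 3 → MvPolynomial (Fin 3 × Fin 3) ℂ,
    ∀ (X : Matrix (Fin 3) (Fin 3) ℂ) (i j : Fin 3),
      Φ X i j = MvPolynomial.eval (fun p => X p.1 p.2) (P i j)

noncomputable def ww : ℂ := (-1 + Real.sqrt 3 * Complex.I) / 2

lemma hr2 : ((Real.sqrt 3 : ℝ) : ℂ)^2 = 3 := by
  norm_cast
  rw [Real.sq_sqrt]; norm_num

lemma hw2 : ww^2 + ww + 1 = 0 := by
  unfold ww
  have hI : (Complex.I)^2 = -1 := Complex.I_sq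
  linear_combination (Complex.I^2/4) * hr2 + (3/4) * hI

lemma hw3 : ww^3 = 1 := by linear_combination (ww - 1) * hw2

lemma hwne1 : ww ≠ 1 := by
  intro h
  have h2 := hw2
  rw [h] at h2
  norm_num at h2

lemma hw2ne1 : ww^2 ≠ 1 := by
  intro h
  have h2 : ww = -2 := by linear_combination hw2 - h
  rw [h2] at h
  norm_num at h

lemma hwne0 : ww ≠ 0 := by
  intro h
  have h2 := hw2
  rw [h] at h2
  norm_num at h2

lemma hw2new : ww^2 ≠ ww := by
  intro h
  have h0 : ww * (ww - 1) = 0 := by linear_combination h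
  rcases mul_eq_zero.mp h0 with h' | h'
  · exact hwne0 h'
  · exact hwne1 (by linear_combination h')

abbrev Mat3 := Matrix (Fin 3) (Fin 3) ℂ

lemma key_equiv (F : Mat3 → Mat3)
    (hF : ∀ (g : Matrix.SpecialLinearGroup (Fin 3) ℂ) (X : Mat3), Matrix.trace X = 0 →
      F ((g : Mat3) * X * ((g⁻¹ : Matrix.SpecialLinearGroup (Fin 3) ℂ) : Mat3)) =
        (g : Mat3) * F X * ((g⁻¹ : Matrix.SpecialLinearGroup (Fin 3) ℂ) : Mat3))
    (T A B : Mat3) (hT : T.det ≠ 0) (hA : Matrix.trace A = 0) (hTA : T * A = B * T) :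
    F B * T = T * F A := by
  obtain ⟨c, hc⟩ := IsAlgClosed.exists_pow_nat_eq T.det (n := 3) (by norm_num)
  have hc0 : c ≠ 0 := by
    intro h; rw [h] at hc; simp at hc; exact hT hc.symm
  have hdet : (c⁻¹ • T).det = 1 := by
    rw [Matrix.det_smul, ← hc]
    have : Fintype.card (Fin 3) = 3 := by simp
    rw [this]
    field_simp
  set g : Matrix.SpecialLinearGroup (Fin 3) ℂ := ⟨c⁻¹ • T, hdet⟩ with hg
  have hgc : (g : Mat3) = c⁻¹ • T := rfl
  have h1 : (g : Mat3) * ((g⁻¹ : Matrix.SpecialLinearGroup (Fin 3) ℂ) : Mat3) = 1 := by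
    rw [← Matrix.SpecialLinearGroup.coe_mul, mul_inv_cancel, Matrix.SpecialLinearGroup.coe_one]
  have h2 : ((g⁻¹ : Matrix.SpecialLinearGroup (Fin 3) ℂ) : Mat3) * (g : Mat3) = 1 := by
    rw [← Matrix.SpecialLinearGroup.coe_mul, inv_mul_cancel, Matrix.SpecialLinearGroup.coe_one]
  have hgA : (g : Mat3) * A = B * (g : Mat3) := by
    rw [hgc, Matrix.smul_mul, Matrix.mul_smul, hTA]
  have h3 : (g : Mat3) * A * ((g⁻¹ : Matrix.SpecialLinearGroup (Fin 3) ℂ) : Mat3) = B := by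
    rw [hgA, mul_assoc, h1, mul_one]
  have h4 := hF g A hA
  rw [h3] at h4
  have h5 : F B * (g : Mat3) = (g : Mat3) * F A := by
    rw [h4, mul_assoc, mul_assoc, h2, mul_one]
  rw [hgc, Matrix.mul_smul, Matrix.smul_mul] at h5
  have := congrArg (fun M => c • M) h5
  simpa [smul_smul, mul_inv_cancel₀ hc0] using this

lemma poly_ext (p q : Polynomial ℂ) (h : ∀ s : ℂ, s ≠ 0 → p.eval s = q.eval s) : p = q := by
  apply Polynomial.eq_of_infinite_eval_eq
  apply Set.Infinite.mono (s := {x : ℂ | x ≠ 0})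
  · exact fun x hx => h x hx
  · exact (Set.finite_singleton (0:ℂ)).infinite_compl

lemma poly_monomial (p : Polynomial ℂ) (hp : p ≠ 0) (h : ∀ s : ℂ, s ≠ 0 → p.eval s ≠ 0) :
    p = Polynomial.C p.leadingCoeff * Polynomial.X ^ p.natDegree := by
  have hcard : p.roots.card = p.natDegree :=
    IsAlgClosed.card_roots_eq_natDegree
  have hroots : p.roots = Multiset.replicate p.natDegree 0 := by
    rw [Multiset.eq_replicate]
    refine ⟨hcard, fun a ha => ?_⟩
    by_contra ha0
    exact h a ha0 ((Polynomial.mem_roots hp).mp ha)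
  have := Polynomial.C_leadingCoeff_mul_prod_multiset_X_sub_C hcard
  rw [hroots] at this
  simp only [Multiset.map_replicate, map_zero, sub_zero, Multiset.prod_replicate] at this
  exact this.symm

lemma eval_aeval (f : Fin 3 × Fin 3 → Polynomial ℂ) (q : MvPolynomial (Fin 3 × Fin 3) ℂ) (s : ℂ) :
    Polynomial.eval s (MvPolynomial.aeval f q) =
      MvPolynomial.eval (fun p => Polynomial.eval s (f p)) q := by
  induction q using MvPolynomial.induction_on with
  | C a => simp
  | add p q hp hq => simp [hp, hq]
  | mul_X p i hp => simp [hp]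

noncomputable def Dm (s : ℂ) : Mat3 := !![s,0,0; 0, ww*s, 0; 0, 0, ww^2*s]
def Xm (s : ℂ) : Mat3 := !![0,1,0; 0,0,1; s^3,0,0]
noncomputable def Vm (s : ℂ) : Mat3 := !![1,1,1; s, ww*s, ww^2*s; s^2, ww^2*s^2, ww*s^2]
def T1m : Mat3 := !![1,0,0; 0,2,0; 0,0,4]
def T2m : Mat3 := !![0,1,0; -1,0,0; 0,0,1]
def T3m : Mat3 := !![0,0,1; 0,1,0; -1,0,0]

lemma trace_Dm (s : ℂ) : (Dm s).trace = 0 := by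
  rw [Matrix.trace_fin_three]
  simp [Dm]
  linear_combination s * hw2

lemma hw4 : ww^4 = ww := by linear_combination ww * hw3

lemma VD (s : ℂ) : Vm s * Dm s = Xm s * Vm s := by
  ext i j
  fin_cases i <;> fin_cases j <;>
    simp [Vm, Dm, Xm, Matrix.mul_apply, Fin.sum_univ_three, Matrix.vecHead, Matrix.vecTail] <;>
    first
      | ring1
      | linear_combination s^3 * hw3
      | linear_combination ww * s^2 * hw3

lemma detV (s : ℂ) (hs : s ≠ 0) : (Vm s).det ≠ 0 := by
  have hdet : (Vm s).det = s^3 * (3 * (ww^2 - ww)) := by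
    rw [Matrix.det_fin_three]
    simp [Vm]
    ring_nf
    linear_combination (-(s^3 * ww)) * hw3
  rw [hdet]
  apply mul_ne_zero (pow_ne_zero 3 hs)
  apply mul_ne_zero (by norm_num)
  exact sub_ne_zero.mpr hw2new

lemma detT1 : (T1m).det ≠ 0 := by
  rw [Matrix.det_fin_three]; simp [T1m]

lemma detT2 : (T2m).det ≠ 0 := by
  rw [Matrix.det_fin_three]; simp [T2m]

lemma detT3 : (T3m).det ≠ 0 := by
  rw [Matrix.det_fin_three]; simp [T3m]

lemma T1D (s : ℂ) : T1m * Dm s = Dm s * T1m := by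
  ext i j
  fin_cases i <;> fin_cases j <;>
    simp [T1m, Dm, Matrix.mul_apply, Fin.sum_univ_three, Matrix.vecHead, Matrix.vecTail] <;> ring

lemma T2Y (Y : Mat3) (hd : ∀ i j : Fin 3, i ≠ j → Y i j = 0) (h : Y 0 0 = Y 1 1) :
    T2m * Y = Y * T2m := by
  have h01 : Y 0 1 = 0 := hd 0 1 (by decide)
  have h02 : Y 0 2 = 0 := hd 0 2 (by decide)
  have h10 : Y 1 0 = 0 := hd 1 0 (by decide)
  have h12 : Y 1 2 = 0 := hd 1 2 (by decide)
  have h20 : Y 2 0 = 0 := hd 2 0 (by decide)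
  have h21 : Y 2 1 = 0 := hd 2 1 (by decide)
  ext i j
  fin_cases i <;> fin_cases j <;>
    simp [T2m, Matrix.mul_apply, Fin.sum_univ_three, Matrix.vecHead, Matrix.vecTail, h01, h02, h10, h12, h20, h21, h]

lemma T3Y (Y : Mat3) (hd : ∀ i j : Fin 3, i ≠ j → Y i j = 0) (h : Y 0 0 = Y 2 2) :
    T3m * Y = Y * T3m := by
  have h01 : Y 0 1 = 0 := hd 0 1 (by decide)
  have h02 : Y 0 2 = 0 := hd 0 2 (by decide)
  have h10 : Y 1 0 = 0 := hd 1 0 (by decide)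
  have h12 : Y 1 2 = 0 := hd 1 2 (by decide)
  have h20 : Y 2 0 = 0 := hd 2 0 (by decide)
  have h21 : Y 2 1 = 0 := hd 2 1 (by decide)
  ext i j
  fin_cases i <;> fin_cases j <;>
    simp [T3m, Matrix.mul_apply, Fin.sum_univ_three, Matrix.vecHead, Matrix.vecTail, h01, h02, h10, h12, h20, h21, h]

lemma hXm0 : Xm 0 = !![0,1,0; 0,0,1; 0,0,0] := by
  ext i j
  fin_cases i <;> fin_cases j <;> norm_num [Xm]

lemma diag_of_commT1 (M : Mat3) (hc : M * T1m = T1m * M) :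
    ∀ i j : Fin 3, i ≠ j → M i j = 0 := by
  have hce : ∀ a b : Fin 3, (M * T1m) a b = (T1m * M) a b := fun a b => by rw [hc]
  have e01 := hce 0 1
  have e02 := hce 0 2
  have e10 := hce 1 0
  have e12 := hce 1 2
  have e20 := hce 2 0
  have e21 := hce 2 1
  simp [T1m, Matrix.mul_apply, Fin.sum_univ_three, Matrix.vecHead, Matrix.vecTail] at e01 e02 e10 e12 e20 e21
  intro i j hij
  fin_cases i <;> fin_cases j
  · exact absurd rfl hij
  · show M 0 1 = 0; linear_combination e01
  · show M 0 2 = 0; linear_combination e02 / 3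
  · show M 1 0 = 0; linear_combination -e10
  · exact absurd rfl hij
  · show M 1 2 = 0; linear_combination e12 / 2
  · show M 2 0 = 0; linear_combination -e20 / 3
  · show M 2 1 = 0; linear_combination -e21 / 2
  · exact absurd rfl hij

lemma vand_row (M N : Mat3) (s : ℂ) (hdN : ∀ i j : Fin 3, i ≠ j → N i j = 0)
    (h : M * Vm s = Vm s * N) :
    (M 0 0 + M 0 1 * s + M 0 2 * s^2 = N 0 0) ∧
    (M 0 0 + M 0 1 * (ww*s) + M 0 2 * (ww^2*s^2) = N 1 1) ∧
    (M 0 0 + M 0 1 * (ww^2*s) + M 0 2 * (ww*s^2) = N 2 2) := by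
  have n10 : N 1 0 = 0 := hdN 1 0 (by decide)
  have n20 : N 2 0 = 0 := hdN 2 0 (by decide)
  have n01 : N 0 1 = 0 := hdN 0 1 (by decide)
  have n21 : N 2 1 = 0 := hdN 2 1 (by decide)
  have n02 : N 0 2 = 0 := hdN 0 2 (by decide)
  have n12 : N 1 2 = 0 := hdN 1 2 (by decide)
  have e0 : (M * Vm s) 0 0 = (Vm s * N) 0 0 := by rw [h]
  have e1 : (M * Vm s) 0 1 = (Vm s * N) 0 1 := by rw [h]
  have e2 : (M * Vm s) 0 2 = (Vm s * N) 0 2 := by rw [h]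
  simp [Vm, Matrix.mul_apply, Fin.sum_univ_three, Matrix.vecHead, Matrix.vecTail,
    n10, n20, n01, n21, n02, n12] at e0 e1 e2
  refine ⟨by linear_combination e0, by linear_combination e1, by linear_combination e2⟩

lemma dm_comm_T2 (s : ℂ) (h : Dm s * T2m = T2m * Dm s) : s = 0 := by
  have e : (Dm s * T2m) 0 1 = (T2m * Dm s) 0 1 := by rw [h]
  simp [Dm, T2m, Matrix.mul_apply, Fin.sum_univ_three, Matrix.vecHead, Matrix.vecTail] at e
  by_contra hs
  field_simp at e
  first
    | exact hwne1 e
    | exact hwne1 (by linear_combination e)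
    | exact hwne1 (by linear_combination -e)

lemma dm_comm_T3 (s : ℂ) (h : Dm s * T3m = T3m * Dm s) : s = 0 := by
  have e : (Dm s * T3m) 0 2 = (T3m * Dm s) 0 2 := by rw [h]
  simp [Dm, T3m, Matrix.mul_apply, Fin.sum_univ_three, Matrix.vecHead, Matrix.vecTail] at e
  by_contra hs
  field_simp at e
  exact hw2ne1 e.symm

/-- There is no `SL₃(ℂ)`-equivariant automorphism of varieties `Φ` of `sl₃(ℂ)`
(with polynomial inverse `Ψ`) sending `e = E₁₂ + E₂₃` to
`e' = E₁₂ - i·E₁₃ + E₂₃`. -/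
theorem stmt7 :
    ¬ ∃ Φ Ψ : Matrix (Fin 3) (Fin 3) ℂ → Matrix (Fin 3) (Fin 3) ℂ,
      IsPolynomialMatrixMap Φ ∧ IsPolynomialMatrixMap Ψ ∧
      (∀ X : Matrix (Fin 3) (Fin 3) ℂ, Matrix.trace X = 0 →
        Matrix.trace (Φ X) = 0 ∧ Matrix.trace (Ψ X) = 0 ∧
        Ψ (Φ X) = X ∧ Φ (Ψ X) = X) ∧
      (∀ (g : Matrix.SpecialLinearGroup (Fin 3) ℂ) (X : Matrix (Fin 3) (Fin 3) ℂ),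
        Matrix.trace X = 0 →
        Φ ((g : Matrix (Fin 3) (Fin 3) ℂ) * X *
            ((g⁻¹ : Matrix.SpecialLinearGroup (Fin 3) ℂ) : Matrix (Fin 3) (Fin 3) ℂ)) =
          (g : Matrix (Fin 3) (Fin 3) ℂ) * Φ X *
            ((g⁻¹ : Matrix.SpecialLinearGroup (Fin 3) ℂ) : Matrix (Fin 3) (Fin 3) ℂ)) ∧
      Φ !![0, 1, 0; 0, 0, 1; 0, 0, 0] = !![0, 1, -Complex.I; 0, 0, 1; 0, 0, 0] := by
  rintro ⟨Φ, Ψ, ⟨PΦ, hPΦ⟩, ⟨PΨ, hPΨ⟩, hinv, hequiv, hΦe⟩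
  classical
  -- Ψ is equivariant
  have hΨequiv : ∀ (g : Matrix.SpecialLinearGroup (Fin 3) ℂ) (X : Mat3), Matrix.trace X = 0 →
      Ψ ((g : Mat3) * X * ((g⁻¹ : Matrix.SpecialLinearGroup (Fin 3) ℂ) : Mat3)) =
        (g : Mat3) * Ψ X * ((g⁻¹ : Matrix.SpecialLinearGroup (Fin 3) ℂ) : Mat3) := by
    intro g X hX
    obtain ⟨-, htrΨ, -, hΦΨ⟩ := hinv X hX
    have hgg : ((g⁻¹ : Matrix.SpecialLinearGroup (Fin 3) ℂ) : Mat3) * (g : Mat3) = 1 := by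
      rw [← Matrix.SpecialLinearGroup.coe_mul, inv_mul_cancel, Matrix.SpecialLinearGroup.coe_one]
    have htrc : Matrix.trace ((g : Mat3) * Ψ X *
        ((g⁻¹ : Matrix.SpecialLinearGroup (Fin 3) ℂ) : Mat3)) = 0 := by
      rw [Matrix.trace_mul_comm, ← mul_assoc, hgg, one_mul]
      exact htrΨ
    have h1 := hequiv g (Ψ X) htrΨ
    rw [hΦΨ] at h1
    rw [← h1]
    exact (hinv _ htrc).2.2.1
  -- Φ (D s) is diagonal
  have hdiag : ∀ s : ℂ, ∀ i j : Fin 3, i ≠ j → Φ (Dm s) i j = 0 := fun s =>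
    diag_of_commT1 _ (key_equiv Φ hequiv T1m (Dm s) (Dm s) detT1 (trace_Dm s) (T1D s))
  -- polynomial curves
  have hexD : ∀ i j : Fin 3, ∃ p : Polynomial ℂ, ∀ s : ℂ, Φ (Dm s) i j = p.eval s := by
    intro i j
    refine ⟨MvPolynomial.aeval (fun pq => Polynomial.C (Dm 1 pq.1 pq.2) * Polynomial.X)
      (PΦ i j), fun s => ?_⟩
    rw [hPΦ, eval_aeval]
    have hfg : (fun p : Fin 3 × Fin 3 => Dm s p.1 p.2)
        = fun p : Fin 3 × Fin 3 => Polynomial.eval s (Polynomial.C (Dm 1 p.1 p.2) * Polynomial.X) := by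
      funext pq
      rcases pq with ⟨a, b⟩
      fin_cases a <;> fin_cases b <;> simp [Dm, Matrix.vecHead, Matrix.vecTail] <;> ring
    rw [hfg]
  have hexX : ∀ i j : Fin 3, ∃ p : Polynomial ℂ, ∀ s : ℂ, Φ (Xm s) i j = p.eval s := by
    intro i j
    refine ⟨MvPolynomial.aeval (fun pq : Fin 3 × Fin 3 =>
      if pq = (2, 0) then Polynomial.X ^ 3 else Polynomial.C (Xm 0 pq.1 pq.2))
      (PΦ i j), fun s => ?_⟩
    rw [hPΦ, eval_aeval]
    have hfg : (fun p : Fin 3 × Fin 3 => Xm s p.1 p.2)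
        = fun p : Fin 3 × Fin 3 => Polynomial.eval s
          (if p = (2, 0) then Polynomial.X ^ 3 else Polynomial.C (Xm 0 p.1 p.2)) := by
      funext pq
      rcases pq with ⟨a, b⟩
      fin_cases a <;> fin_cases b <;> simp [Xm, Prod.ext_iff, Matrix.vecHead, Matrix.vecTail]
    rw [hfg]
  obtain ⟨pd0, hpd0⟩ := hexD 0 0
  obtain ⟨pd1, hpd1⟩ := hexD 1 1
  obtain ⟨pd2, hpd2⟩ := hexD 2 2
  obtain ⟨pA, hpA⟩ := hexX 0 0
  obtain ⟨pB, hpB⟩ := hexX 0 1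
  obtain ⟨pG, hpG⟩ := hexX 0 2
  -- values at 0
  have hBc : pB.coeff 0 = 1 := by
    rw [Polynomial.coeff_zero_eq_eval_zero, ← hpB 0, hXm0, hΦe]
    norm_num
  have hGc : pG.coeff 0 = -Complex.I := by
    rw [Polynomial.coeff_zero_eq_eval_zero, ← hpG 0, hXm0, hΦe]
    norm_num
    rfl
  -- Vandermonde identities pointwise
  have hvand : ∀ s : ℂ, s ≠ 0 →
      (pA.eval s + pB.eval s * s + pG.eval s * s^2 = pd0.eval s) ∧
      (pA.eval s + pB.eval s * (ww*s) + pG.eval s * (ww^2*s^2) = pd1.eval s) ∧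
      (pA.eval s + pB.eval s * (ww^2*s) + pG.eval s * (ww*s^2) = pd2.eval s) := by
    intro s hs
    have hk := key_equiv Φ hequiv (Vm s) (Dm s) (Xm s) (detV s hs) (trace_Dm s) (VD s)
    have hv := vand_row (Φ (Xm s)) (Φ (Dm s)) s (hdiag s) hk
    rw [hpA s, hpB s, hpG s, hpd0 s, hpd1 s, hpd2 s] at hv
    exact hv
  -- polynomial identities
  have I0 : pA + Polynomial.X * pB + Polynomial.X^2 * pG = pd0 := by
    apply poly_ext
    intro s hs
    have h := (hvand s hs).1
    simp only [Polynomial.eval_add, Polynomial.eval_mul, Polynomial.eval_pow, Polynomial.eval_X]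
    linear_combination h
  have I1 : pA + Polynomial.C ww * Polynomial.X * pB
      + (Polynomial.C ww)^2 * Polynomial.X^2 * pG = pd1 := by
    apply poly_ext
    intro s hs
    have h := (hvand s hs).2.1
    simp only [Polynomial.eval_add, Polynomial.eval_mul, Polynomial.eval_pow, Polynomial.eval_X,
      Polynomial.eval_C]
    linear_combination h
  have I2 : pA + (Polynomial.C ww)^2 * Polynomial.X * pB
      + Polynomial.C ww * Polynomial.X^2 * pG = pd2 := by
    apply poly_ext
    intro s hs
    have h := (hvand s hs).2.2
    simp only [Polynomial.eval_add, Polynomial.eval_mul, Polynomial.eval_pow, Polynomial.eval_X,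
      Polynomial.eval_C]
    linear_combination h
  -- collisions are impossible away from 0
  have hcol1 : ∀ s : ℂ, s ≠ 0 → pd0.eval s ≠ pd1.eval s := by
    intro s hs heq
    obtain ⟨htrY, -, hΨΦ, -⟩ := hinv (Dm s) (trace_Dm s)
    rw [← hpd0 s, ← hpd1 s] at heq
    have hcomm : T2m * Φ (Dm s) = Φ (Dm s) * T2m := T2Y _ (hdiag s) heq
    have hk := key_equiv Ψ hΨequiv T2m (Φ (Dm s)) (Φ (Dm s)) detT2 htrY hcomm
    rw [hΨΦ] at hk
    exact hs (dm_comm_T2 s hk)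
  have hcol2 : ∀ s : ℂ, s ≠ 0 → pd0.eval s ≠ pd2.eval s := by
    intro s hs heq
    obtain ⟨htrY, -, hΨΦ, -⟩ := hinv (Dm s) (trace_Dm s)
    rw [← hpd0 s, ← hpd2 s] at heq
    have hcomm : T3m * Φ (Dm s) = Φ (Dm s) * T3m := T3Y _ (hdiag s) heq
    have hk := key_equiv Ψ hΨequiv T3m (Φ (Dm s)) (Φ (Dm s)) detT3 htrY hcomm
    rw [hΨΦ] at hk
    exact hs (dm_comm_T3 s hk)
  -- monomial structure
  have hm1ne : pd0 - pd1 ≠ 0 := by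
    intro h0
    apply hcol1 1 one_ne_zero
    have := congrArg (Polynomial.eval 1) h0
    simp only [Polynomial.eval_sub, Polynomial.eval_zero] at this
    exact sub_eq_zero.mp this
  have hm1nv : ∀ s : ℂ, s ≠ 0 → (pd0 - pd1).eval s ≠ 0 := by
    intro s hs h0
    rw [Polynomial.eval_sub] at h0
    exact hcol1 s hs (sub_eq_zero.mp h0)
  have hm2ne : pd0 - pd2 ≠ 0 := by
    intro h0
    apply hcol2 1 one_ne_zero
    have := congrArg (Polynomial.eval 1) h0
    simp only [Polynomial.eval_sub, Polynomial.eval_zero] at this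
    exact sub_eq_zero.mp this
  have hm2nv : ∀ s : ℂ, s ≠ 0 → (pd0 - pd2).eval s ≠ 0 := by
    intro s hs h0
    rw [Polynomial.eval_sub] at h0
    exact hcol2 s hs (sub_eq_zero.mp h0)
  set c := (pd0 - pd1).leadingCoeff with hcdef
  set c' := (pd0 - pd2).leadingCoeff with hcdef'
  set n := (pd0 - pd1).natDegree with hndef
  set n' := (pd0 - pd2).natDegree with hndef'
  have hc : c ≠ 0 := Polynomial.leadingCoeff_ne_zero.mpr hm1ne
  have hc' : c' ≠ 0 := Polynomial.leadingCoeff_ne_zero.mpr hm2ne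
  have hmono1 : pd0 - pd1 = Polynomial.C c * Polynomial.X ^ n := poly_monomial _ hm1ne hm1nv
  have hmono2 : pd0 - pd2 = Polynomial.C c' * Polynomial.X ^ n' := poly_monomial _ hm2ne hm2nv
  -- the two master identities
  have hCw2 : (Polynomial.C ww)^2 + Polynomial.C ww + 1 = (0 : Polynomial ℂ) := by
    have := congrArg Polynomial.C hw2
    simpa using this
  have hCw3 : (Polynomial.C ww)^3 = (1 : Polynomial ℂ) := by
    have := congrArg Polynomial.C hw3
    simpa using this
  have hC3 : (Polynomial.C (3:ℂ) : Polynomial ℂ) = 3 := by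
    exact map_ofNat Polynomial.C 3
  obtain ⟨a1, ha1⟩ : ∃ a : ℂ, a = -(ww^2*c) := ⟨_, rfl⟩
  obtain ⟨a2, ha2⟩ : ∃ a : ℂ, a = -(ww*c') := ⟨_, rfl⟩
  obtain ⟨b1, hb1⟩ : ∃ a : ℂ, a = -(ww*c) := ⟨_, rfl⟩
  obtain ⟨b2, hb2⟩ : ∃ a : ℂ, a = -(ww^2*c') := ⟨_, rfl⟩
  have hCa1 : Polynomial.C a1 = -((Polynomial.C ww)^2 * Polynomial.C c) := by
    rw [ha1, _root_.map_neg, _root_.map_mul, _root_.map_pow]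
  have hCa2 : Polynomial.C a2 = -(Polynomial.C ww * Polynomial.C c') := by
    rw [ha2, _root_.map_neg, _root_.map_mul]
  have hCb1 : Polynomial.C b1 = -(Polynomial.C ww * Polynomial.C c) := by
    rw [hb1, _root_.map_neg, _root_.map_mul]
  have hCb2 : Polynomial.C b2 = -((Polynomial.C ww)^2 * Polynomial.C c') := by
    rw [hb2, _root_.map_neg, _root_.map_mul, _root_.map_pow]
  have E1 : Polynomial.C a1 * Polynomial.X ^ n
      + Polynomial.C a2 * Polynomial.X ^ n'
      = Polynomial.C 3 * (pB * Polynomial.X ^ 1) := by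
    rw [hCa1, hCa2, hC3]
    linear_combination (Polynomial.X * pB * 2 + Polynomial.X^2 * pG * Polynomial.C ww) * hCw3
      - (Polynomial.X * pB) * hCw2 + (Polynomial.C ww)^2 * hmono1 + Polynomial.C ww * hmono2
      + (Polynomial.C ww)^2 * I0 - (Polynomial.C ww)^2 * I1 + Polynomial.C ww * I0
      - Polynomial.C ww * I2
  have E2 : Polynomial.C b1 * Polynomial.X ^ n
      + Polynomial.C b2 * Polynomial.X ^ n'
      = Polynomial.C 3 * (pG * Polynomial.X ^ 2) := by
    rw [hCb1, hCb2, hC3]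
    linear_combination (Polynomial.X * pB * Polynomial.C ww + 2 * Polynomial.X^2 * pG) * hCw3
      - (Polynomial.X^2 * pG) * hCw2 + Polynomial.C ww * hmono1 + (Polynomial.C ww)^2 * hmono2
      + Polynomial.C ww * I0 - Polynomial.C ww * I1 + (Polynomial.C ww)^2 * I0
      - (Polynomial.C ww)^2 * I2
  have hw2c : ww^2 * c ≠ 0 := mul_ne_zero (pow_ne_zero 2 hwne0) hc
  have hwc : ww * c ≠ 0 := mul_ne_zero hwne0 hc
  have hw2c' : ww^2 * c' ≠ 0 := mul_ne_zero (pow_ne_zero 2 hwne0) hc'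
  have hwc' : ww * c' ≠ 0 := mul_ne_zero hwne0 hc'
  have hA0 : pd0.eval 0 = pA.eval 0 := by
    have h := congrArg (Polynomial.eval 0) I0
    simpa using h.symm
  have hA1 : pd1.eval 0 = pA.eval 0 := by
    have h := congrArg (Polynomial.eval 0) I1
    simpa using h.symm
  have hA2 : pd2.eval 0 = pA.eval 0 := by
    have h := congrArg (Polynomial.eval 0) I2
    simpa using h.symm
  have hn0 : n ≠ 0 := by
    intro h0
    apply hc
    have h1 := congrArg (Polynomial.eval 0) hmono1
    rw [h0] at h1
    simp only [Polynomial.eval_sub, Polynomial.eval_mul, Polynomial.eval_C, pow_zero,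
      Polynomial.eval_one, mul_one, hA0, hA1] at h1
    linear_combination -h1
  have hn0' : n' ≠ 0 := by
    intro h0
    apply hc'
    have h1 := congrArg (Polynomial.eval 0) hmono2
    rw [h0] at h1
    simp only [Polynomial.eval_sub, Polynomial.eval_mul, Polynomial.eval_C, pow_zero,
      Polynomial.eval_one, mul_one, hA0, hA2] at h1
    linear_combination -h1
  by_cases hn : n = 1 <;> by_cases hn' : n' = 1
  · -- both 1 : coefficient 2 of E2
    have h := congrArg (fun p : Polynomial ℂ => p.coeff 2) E2
    simp only [Polynomial.coeff_add, Polynomial.coeff_C_mul, Polynomial.coeff_X_pow,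
      Polynomial.coeff_mul_X_pow', Polynomial.coeff_C, hn, hn'] at h
    norm_num [hGc] at h
  · -- n = 1, n' ≠ 1 : coefficient 1 of E2
    have hnle' : ¬ (n' ≤ 1) := by omega
    have h := congrArg (fun p : Polynomial ℂ => p.coeff 1) E2
    simp only [Polynomial.coeff_add, Polynomial.coeff_C_mul, Polynomial.coeff_X_pow,
      Polynomial.coeff_mul_X_pow', Polynomial.coeff_C, hn, hnle', Ne.symm hn'] at h
    norm_num at h
    apply hwc
    first
      | linear_combination -hb1 - h
      | linear_combination hb1 - h
      | linear_combination -hb1 + h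
      | linear_combination hb1 + h
  · -- n ≠ 1, n' = 1 : coefficient 1 of E2
    have hnle : ¬ (n ≤ 1) := by omega
    have h := congrArg (fun p : Polynomial ℂ => p.coeff 1) E2
    simp only [Polynomial.coeff_add, Polynomial.coeff_C_mul, Polynomial.coeff_X_pow,
      Polynomial.coeff_mul_X_pow', Polynomial.coeff_C, hn', hnle, Ne.symm hn] at h
    norm_num at h
    apply hw2c'
    first
      | linear_combination -hb2 - h
      | linear_combination hb2 - h
      | linear_combination -hb2 + h
      | linear_combination hb2 + h
  · -- neither : coefficient 1 of E1
    have hnle : ¬ (n ≤ 1) := by omega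
    have hnle' : ¬ (n' ≤ 1) := by omega
    have h := congrArg (fun p : Polynomial ℂ => p.coeff 1) E1
    simp only [Polynomial.coeff_add, Polynomial.coeff_C_mul, Polynomial.coeff_X_pow,
      Polynomial.coeff_mul_X_pow', Polynomial.coeff_C, Ne.symm hn, Ne.symm hn', hnle, hnle'] at h
    norm_num [hBc] at h
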